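/- Let L > 0 and θ₀ ∈ (π/2,π). Let F_K(z) = 2(1 − C_L(z)) − L · z · S_L(z) (equivalently, F_K(z) = 2[1 − cos(z^{1/2}L)] − L z^{1/2} sin(z^{1/2}L)). Then, writing z(t) = t e^{iθ₀} for t > 0 and using the principal square root, F_K(z(t)) / [−(i/2) L z(t)^{1/2} exp(−i z(t)^{1/2} L)] − 1 = O(t^{−1/2}) as t → ∞. -/

import Mathlib

open Complex Filter Asymptotics

/-- `CL L z = ∑ (-1)^k z^k L^(2k)/(2k)!`, the entire function with `CL L z = cos(√z L)`. -/
noncomputable def CL (L : ℝ) (z : ℂ) : ℂ :=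
  ∑' k : ℕ, (-1 : ℂ) ^ k * z ^ k * (L : ℂ) ^ (2 * k) / (Nat.factorial (2 * k) : ℂ)

/-- `SL L z = ∑ (-1)^k z^k L^(2k+1)/(2k+1)!`, the entire function with
`SL L z = sin(√z L)/√z`. -/
noncomputable def SL (L : ℝ) (z : ℂ) : ℂ :=
  ∑' k : ℕ, (-1 : ℂ) ^ k * z ^ k * (L : ℂ) ^ (2 * k + 1) / (Nat.factorial (2 * k + 1) : ℂ)

/-- The characteristic function `F_{α,β}` of `-d²/dx²` on an interval of length `L`
with separated boundary conditions given by `α`, `β`. -/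
noncomputable def FSep (L α β : ℝ) (z : ℂ) : ℂ :=
  (Real.cos α : ℂ) * (-(Real.sin β : ℂ) * CL L z + (Real.cos β : ℂ) * SL L z)
    - (Real.sin α : ℂ) * ((Real.sin β : ℂ) * z * SL L z + (Real.cos β : ℂ) * CL L z)

/-- The characteristic function `F_K` of the Krein--von Neumann extension of `-d²/dx²`
on an interval of length `L`. -/
noncomputable def FKrein (L : ℝ) (z : ℂ) : ℂ :=
  2 * (1 - CL L z) - (L : ℂ) * z * SL L z

lemma CL_sq (L : ℝ) (w : ℂ) : CL L (w * w) = Complex.cos (w * L) := by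
  rw [CL, ← (Complex.hasSum_cos (w * L)).tsum_eq]
  refine tsum_congr fun k => ?_
  rw [mul_pow, pow_mul, sq, mul_pow]
  ring

lemma SL_sq (L : ℝ) (w : ℂ) : (w * w) * SL L (w * w) = w * Complex.sin (w * L) := by
  rw [SL, ← tsum_mul_left, ← ((Complex.hasSum_sin (w * L)).mul_left w).tsum_eq]
  refine tsum_congr fun k => ?_
  rw [mul_pow, pow_succ, pow_mul, sq, mul_pow]
  ring

lemma FKrein_sq (L : ℝ) (w : ℂ) :
    FKrein L (w * w) = 2 * (1 - Complex.cos (w * L)) - (L : ℂ) * (w * Complex.sin (w * L)) := by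
  rw [FKrein, CL_sq, mul_assoc, SL_sq]

theorem statement9 (L : ℝ) (hL : 0 < L) (θ₀ : ℝ)
    (hθ₀ : θ₀ ∈ Set.Ioo (Real.pi / 2) Real.pi) :
    (fun t : ℝ =>
      FKrein L ((t : ℂ) * Complex.exp (Complex.I * θ₀)) /
        (-(Complex.I / 2) * (L : ℂ) * ((t : ℂ) * Complex.exp (Complex.I * θ₀)) ^ (1 / 2 : ℂ)
          * Complex.exp (-Complex.I * ((t : ℂ) * Complex.exp (Complex.I * θ₀)) ^ (1 / 2 : ℂ) * L))
        - 1)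
      =O[atTop] (fun t : ℝ => t ^ (-(1 / 2 : ℝ))) := by
  obtain ⟨hθ1, hθ2⟩ := hθ₀
  have hπ := Real.pi_pos
  have hθpos : 0 < θ₀ := by linarith
  have hsin : 0 < Real.sin (θ₀ / 2) :=
    Real.sin_pos_of_pos_of_lt_pi (by linarith) (by linarith)
  rw [isBigO_iff]
  refine ⟨8 / L + 1 / (2 * L * Real.sin (θ₀ / 2)), ?_⟩
  filter_upwards [eventually_ge_atTop 1] with t ht
  have ht0 : (0:ℝ) < t := lt_of_lt_of_le one_pos ht
  set s : ℝ := Real.sqrt t with hsdef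
  have hs1 : 1 ≤ s := by
    rw [hsdef, show (1:ℝ) = Real.sqrt 1 by rw [Real.sqrt_one]]
    exact Real.sqrt_le_sqrt ht
  have hs0 : (0:ℝ) < s := lt_of_lt_of_le one_pos hs1
  set z : ℂ := (t:ℂ) * Complex.exp (Complex.I * θ₀) with hzdef
  have habs : ‖z‖ = t := by
    rw [hzdef, norm_mul, Complex.norm_real, Real.norm_eq_abs, abs_of_pos ht0, Complex.norm_exp]
    simp
  have hzne : z ≠ 0 := by
    intro h; rw [h] at habs; simp at habs; linarith
  have hw : z ^ (1/2 : ℂ) = (s : ℂ) * Complex.exp (Complex.I * ((θ₀/2 : ℝ) : ℂ)) := by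
    have harg : Complex.arg z = θ₀ := by
      have hz' : z = (t:ℂ) * (Complex.cos (θ₀:ℂ) + Complex.sin (θ₀:ℂ) * Complex.I) := by
        rw [hzdef, mul_comm Complex.I (θ₀:ℂ), Complex.exp_mul_I]
      rw [hz']
      exact Complex.arg_mul_cos_add_sin_mul_I ht0 ⟨by linarith, le_of_lt hθ2⟩
    have hlog : Complex.log z = (Real.log t : ℂ) + (θ₀ : ℂ) * Complex.I := by
      rw [Complex.log, habs, harg]
    rw [Complex.cpow_def_of_ne_zero hzne, hlog]
    have h3 : ((Real.log t : ℂ) + (θ₀ : ℂ) * Complex.I) * (1/2)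
        = ((Real.log t / 2 : ℝ) : ℂ) + Complex.I * ((θ₀/2 : ℝ) : ℂ) := by
      push_cast; ring
    have h4 : Real.exp (Real.log t / 2) = Real.sqrt t := by
      rw [← Real.log_sqrt ht0.le, Real.exp_log (Real.sqrt_pos.2 ht0)]
    rw [h3, Complex.exp_add, ← Complex.ofReal_exp, h4]
  set W : ℂ := (s : ℂ) * Complex.exp (Complex.I * ((θ₀/2 : ℝ) : ℂ)) with hWdef
  have hW2 : W * W = z := by
    have h5 : z ^ ((1:ℂ)/2) * z ^ ((1:ℂ)/2) = z := by
      rw [← Complex.cpow_add _ _ hzne]; norm_num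
    rw [← hw]; exact h5
  have habsW : ‖W‖ = s := by
    rw [hWdef, norm_mul, Complex.norm_real, Real.norm_eq_abs, abs_of_pos hs0, Complex.norm_exp]
    simp
  have hWne : W ≠ 0 := by
    intro h; rw [h] at habsW; simp at habsW; linarith
  have him : W.im = s * Real.sin (θ₀ / 2) := by
    rw [hWdef]
    simp [Complex.mul_im, Complex.exp_im]
  set m : ℝ := W.im * L with hmdef
  have hm0 : 0 < m := by
    rw [hmdef, him]; positivity
  set a : ℂ := Complex.exp (W * (L:ℂ) * Complex.I) with hadef
  set b : ℂ := Complex.exp (-(W * (L:ℂ)) * Complex.I) with hbdef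
  have hDarg : Complex.exp (-Complex.I * W * (L:ℂ)) = b := by
    rw [hbdef, show -(W * (L:ℂ)) * Complex.I = -Complex.I * W * (L:ℂ) by ring]
  have habsa : ‖a‖ = Real.exp (-m) := by
    rw [hadef, Complex.norm_exp]
    congr 1
    simp [Complex.mul_re, Complex.mul_im, hmdef]
  have habsb : ‖b‖ = Real.exp m := by
    rw [hbdef, Complex.norm_exp]
    congr 1
    simp [Complex.mul_re, Complex.mul_im, hmdef]
  have hbne : b ≠ 0 := Complex.exp_ne_zero _
  have hDne : -(Complex.I/2) * (L:ℂ) * W * b ≠ 0 := by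
    apply mul_ne_zero (mul_ne_zero (mul_ne_zero ?_ ?_) hWne) hbne
    · simp [Complex.I_ne_zero]
    · exact_mod_cast hL.ne'
  have hnum : FKrein L z
      = (-(Complex.I/2) * (L:ℂ) * W * b)
        + (2 - a - b + (Complex.I * (L:ℂ) * W / 2) * a) := by
    rw [← hW2, FKrein_sq]
    simp only [Complex.cos, Complex.sin, hadef, hbdef]
    ring
  -- rewrite the goal
  rw [hw, hDarg, hnum, div_sub_one hDne, add_sub_cancel_left]
  rw [norm_div]
  have habsD : ‖-(Complex.I/2) * (L:ℂ) * W * b‖ = L * s / 2 * Real.exp m := by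
    rw [norm_mul, norm_mul, norm_mul, habsW, habsb,
      Complex.norm_real, Real.norm_eq_abs, abs_of_pos hL]
    have : ‖(-(Complex.I/2))‖ = 1/2 := by
      rw [norm_neg, norm_div, Complex.norm_I, Complex.norm_two]
    rw [this]; ring
  have habsN : ‖2 - a - b + (Complex.I * (L:ℂ) * W / 2) * a‖
      ≤ 2 + Real.exp (-m) + Real.exp m + L * s / 2 * Real.exp (-m) := by
    have h6 : ‖(Complex.I * (L:ℂ) * W / 2) * a‖ = L * s / 2 * Real.exp (-m) := by
      rw [norm_mul, norm_div, norm_mul, norm_mul, Complex.norm_I,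
        habsW, habsa, Complex.norm_real, Real.norm_eq_abs, abs_of_pos hL, Complex.norm_two]
      ring
    calc ‖2 - a - b + (Complex.I * (L:ℂ) * W / 2) * a‖
        ≤ ‖2 - a - b‖ + ‖(Complex.I * (L:ℂ) * W / 2) * a‖ := norm_add_le _ _
      _ ≤ (‖(2:ℂ) - a‖ + ‖b‖) + ‖(Complex.I * (L:ℂ) * W / 2) * a‖ := by
          gcongr; exact norm_sub_le _ _
      _ ≤ ((‖(2:ℂ)‖ + ‖a‖) + ‖b‖) + ‖(Complex.I * (L:ℂ) * W / 2) * a‖ := by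
          gcongr; exact norm_sub_le _ _
      _ = 2 + Real.exp (-m) + Real.exp m + L * s / 2 * Real.exp (-m) := by
          rw [h6,
            habsa, habsb, Complex.norm_two]
  have hg : |t ^ (-(1/2) : ℝ)| = s⁻¹ := by
    rw [abs_of_pos (Real.rpow_pos_of_pos ht0 _), Real.rpow_neg ht0.le, hsdef,
      Real.sqrt_eq_rpow]
  have hden : (0:ℝ) < L * s / 2 * Real.exp m := by positivity
  have key : (2 + Real.exp (-m) + Real.exp m + L * s / 2 * Real.exp (-m))
        / (L * s / 2 * Real.exp m)
      ≤ (8 / L + 1 / (2 * L * Real.sin (θ₀ / 2))) * s⁻¹ := by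
    have hmval : m = s * Real.sin (θ₀ / 2) * L := by rw [hmdef, him]
    have e1 : Real.exp (-m) ≤ 1 := by
      calc Real.exp (-m) ≤ Real.exp 0 := Real.exp_le_exp.mpr (by linarith)
        _ = 1 := Real.exp_zero
    have e2 : 1 ≤ Real.exp m := Real.one_le_exp hm0.le
    have hE : Real.exp (-m) / Real.exp m ≤ 1 / (2 * m) := by
      rw [div_le_div_iff₀ (Real.exp_pos _) (by positivity)]
      calc Real.exp (-m) * (2 * m) = (2 * m) / Real.exp m := by
            rw [Real.exp_neg]; ring
        _ ≤ Real.exp m := by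
            rw [div_le_iff₀ (Real.exp_pos _), ← Real.exp_add]
            linarith [Real.add_one_le_exp (m + m), hm0]
        _ = 1 * Real.exp m := (one_mul _).symm
    calc (2 + Real.exp (-m) + Real.exp m + L * s / 2 * Real.exp (-m))
          / (L * s / 2 * Real.exp m)
        = (2 + Real.exp (-m) + Real.exp m) / (L * s / 2 * Real.exp m)
          + (L * s / 2 * Real.exp (-m)) / (L * s / 2 * Real.exp m) := by
          rw [← add_div]
      _ ≤ (4 * Real.exp m) / (L * s / 2 * Real.exp m)
          + (L * s / 2 * Real.exp (-m)) / (L * s / 2 * Real.exp m) := by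
          gcongr
          linarith
      _ = 8 / (L * s) + Real.exp (-m) / Real.exp m := by
          rw [mul_div_mul_left _ _ (by positivity : L * s / 2 ≠ 0)]
          congr 1
          field_simp
          ring
      _ ≤ 8 / (L * s) + 1 / (2 * m) := by linarith
      _ = (8 / L + 1 / (2 * L * Real.sin (θ₀ / 2))) * s⁻¹ := by
          rw [hmval]
          field_simp
  rw [habsD, Real.norm_eq_abs, hg]
  calc ‖2 - a - b + Complex.I * (L:ℂ) * W / 2 * a‖ / (L * s / 2 * Real.exp m)
      ≤ (2 + Real.exp (-m) + Real.exp m + L * s / 2 * Real.exp (-m))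
        / (L * s / 2 * Real.exp m) := by gcongr
    _ ≤ (8 / L + 1 / (2 * L * Real.sin (θ₀ / 2))) * s⁻¹ := key
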